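/- In the Byzcuit object transition system, sequence numbers never decrease along any execution: if Active s →* σ, then (a) if σ = Active s' then s' ≥ s, and (b) if σ = Locked T' s' then s' ≥ s. Moreover, each abort step strictly increases the object's sequence number: if Step (Active s) (lock T sT) (Locked T sT) and Step (Locked T sT) (abort T sT) (Active s'), then s' = sT + 1 > sT ≥ s. -/
import Mathlib


/-- States of the life cycle of a single Byzcuit object. -/
inductive ObjState : Type where
  | Active : ℕ → ObjState
  | Locked : ℕ → ℕ → ObjState
  | Inactive : ℕ → ObjState
deriving DecidableEq

/-- Labels of the transitions: lock, commit and abort, each carrying a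
transaction `T` and a transaction sequence number `sT`. -/
inductive Label : Type where
  | lock : ℕ → ℕ → Label
  | commit : ℕ → ℕ → Label
  | abort : ℕ → ℕ → Label
deriving DecidableEq

/-- The step relation of the Byzcuit object transition system, generated by
exactly three rules. -/
inductive Step : ObjState → Label → ObjState → Prop where
  | lock {s T sT : ℕ} (h : sT ≥ s) :
      Step (.Active s) (.lock T sT) (.Locked T sT)
  | commit {T sT : ℕ} :
      Step (.Locked T sT) (.commit T sT) (.Inactive T)
  | abort {T sT : ℕ} :
      Step (.Locked T sT) (.abort T sT) (.Active (sT + 1))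

/-- Reachability by zero or more steps (labels existentially quantified). -/
inductive Reach : ObjState → ObjState → Prop where
  | refl (σ : ObjState) : Reach σ σ
  | tail {σ σ' σ'' : ObjState} (h : Reach σ σ') (ℓ : Label)
      (hs : Step σ' ℓ σ'') : Reach σ σ''

/-- **Sequence numbers never decrease along any execution**, and each abort
step strictly increases the object's sequence number. -/
theorem seq_monotone :
    (∀ (s : ℕ) (σ : ObjState), Reach (.Active s) σ →
      (∀ s' : ℕ, σ = .Active s' → s' ≥ s) ∧
      (∀ T' s' : ℕ, σ = .Locked T' s' → s' ≥ s)) ∧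
    (∀ (s T sT s' : ℕ),
      Step (.Active s) (.lock T sT) (.Locked T sT) →
      Step (.Locked T sT) (.abort T sT) (.Active s') →
      s' = sT + 1 ∧ sT + 1 > sT ∧ sT ≥ s) := by
  constructor
  · intro s σ h
    induction h with
    | refl =>
      refine ⟨fun s' hs => ?_, fun T' s' hs => ?_⟩
      · cases hs; exact le_refl _
      · cases hs
    | tail h ℓ hs ih =>
      cases hs with
      | lock hge =>
        refine ⟨fun s' hs => ?_, fun T' s' hs => ?_⟩
        · cases hs
        · cases hs; exact le_trans (ih.1 _ rfl) hge
      | commit =>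
        refine ⟨fun s' hs => ?_, fun T' s' hs => ?_⟩ <;> cases hs
      | abort =>
        refine ⟨fun s' hs => ?_, fun T' s' hs => ?_⟩
        · cases hs; exact le_trans (ih.2 _ _ rfl) (Nat.le_succ _)
        · cases hs
  · intro s T sT s' h1 h2
    cases h1 with
    | lock hge =>
      cases h2
      exact ⟨rfl, Nat.lt_succ_self _, hge⟩
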